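/- Self-dual representation: let φ be α-exponentially concave with α-gradient η = D^{(α)}φ and α-conjugate ψ(η) = c^{(α)}(ξ,η) - φ(ξ) for η = D^{(α)}φ(ξ). Then for all ξ, ξ' ∈ Ω, D^{(α)}[ξ : ξ'] = c^{(α)}(ξ, η') - φ(ξ) - ψ(η') where η' = D^{(α)}φ(ξ'). -/

import Mathlib

open scoped RealInnerProductSpace

noncomputable def alphaGrad {d : ℕ} (α : ℝ)
    (Dφ : EuclideanSpace ℝ (Fin d) → EuclideanSpace ℝ (Fin d))
    (ξ : EuclideanSpace ℝ (Fin d)) : EuclideanSpace ℝ (Fin d) :=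
  (1 - α * ⟪Dφ ξ, ξ⟫)⁻¹ • Dφ ξ

private lemma aux1 (α a b : ℝ) (h : 1 - α * b ≠ 0) :
    1 + α * ((1 - α * b)⁻¹ * a) = (1 + α * (a - b)) / (1 - α * b) := by
  field_simp; ring

private lemma aux2 (α b : ℝ) (h : 1 - α * b ≠ 0) :
    1 + α * ((1 - α * b)⁻¹ * b) = (1 - α * b)⁻¹ := by
  field_simp; ring

/-- self-dual representation of the `L^{(α)}`-divergence:
`D^{(α)}[ξ : ξ'] = c^{(α)}(ξ, η') - φ(ξ) - ψ(η')`, `η' = D^{(α)}φ(ξ')`. -/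
theorem stmt10 {d : ℕ} (Ω : Set (EuclideanSpace ℝ (Fin d)))
    (hΩ : IsOpen Ω) (hconv : Convex ℝ Ω) (α : ℝ) (hα : 0 < α)
    (φ ψ : EuclideanSpace ℝ (Fin d) → ℝ)
    (Dφ : EuclideanSpace ℝ (Fin d) → EuclideanSpace ℝ (Fin d))
    (hgrad : ∀ ζ ∈ Ω, HasGradientAt φ (Dφ ζ) ζ)
    (hconc : ConcaveOn ℝ Ω (fun ξ => Real.exp (α * φ ξ)))
    (hpos : ∀ ζ ∈ Ω, 0 < 1 - α * ⟪Dφ ζ, ζ⟫)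
    (hψ : ∀ ζ ∈ Ω, ψ (alphaGrad α Dφ ζ) =
      (1/α) * Real.log (1 + α * ⟪ζ, alphaGrad α Dφ ζ⟫) - φ ζ) :
    ∀ ξ ∈ Ω, ∀ ξ' ∈ Ω,
      (1/α) * Real.log (1 + α * ⟪Dφ ξ', ξ - ξ'⟫) - (φ ξ - φ ξ') =
        (1/α) * Real.log (1 + α * ⟪ξ, alphaGrad α Dφ ξ'⟫) - φ ξ -
          ψ (alphaGrad α Dφ ξ') := by
  intro ξ hξ ξ' hξ'
  have hp : 0 < 1 - α * ⟪Dφ ξ', ξ'⟫ := hpos ξ' hξ'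
  -- positivity of 1 + α⟪Dφ ξ', ξ - ξ'⟫ from exponential concavity
  have hkey : 0 < 1 + α * ⟪Dφ ξ', ξ - ξ'⟫ := by
    set L : ℝ →ᵃ[ℝ] EuclideanSpace ℝ (Fin d) := AffineMap.lineMap ξ' ξ with hLdef
    have hL0 : L 0 = ξ' := AffineMap.lineMap_apply_zero _ _
    have hL1 : L 1 = ξ := AffineMap.lineMap_apply_one _ _
    have hconc' : ConcaveOn ℝ (L ⁻¹' Ω) ((fun z => Real.exp (α * φ z)) ∘ L) :=
      hconc.comp_affineMap L
    have h0 : (0 : ℝ) ∈ L ⁻¹' Ω := by simp [Set.mem_preimage, hL0, hξ']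
    have h1 : (1 : ℝ) ∈ L ⁻¹' Ω := by simp [Set.mem_preimage, hL1, hξ]
    have hderivL : HasDerivAt L (ξ - ξ') 0 := AffineMap.hasDerivAt_lineMap
    have hF : HasFDerivAt φ (InnerProductSpace.toDual ℝ _ (Dφ ξ')) (L 0) := by
      rw [hL0]; exact (hgrad ξ' hξ').hasFDerivAt
    have hφL : HasDerivAt (fun t => φ (L t)) ⟪Dφ ξ', ξ - ξ'⟫ 0 := by
      have := hF.comp_hasDerivAt 0 hderivL
      simp [Function.comp, InnerProductSpace.toDual_apply_apply] at this; exact this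
    have hg : HasDerivAt (fun t => Real.exp (α * φ (L t)))
        (Real.exp (α * φ ξ') * (α * ⟪Dφ ξ', ξ - ξ'⟫)) 0 := by
      have := (hφL.const_mul α).exp
      simpa [hL0] using this
    have hslope := hconc'.slope_le_of_hasDerivAt h0 h1 zero_lt_one hg
    have hsl : Real.exp (α * φ ξ) - Real.exp (α * φ ξ') ≤
        Real.exp (α * φ ξ') * (α * ⟪Dφ ξ', ξ - ξ'⟫) := by
      simpa [slope, hL0, hL1, Function.comp] using hslope
    have h1pos := Real.exp_pos (α * φ ξ)
    have h2pos := Real.exp_pos (α * φ ξ')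
    nlinarith
  -- algebra
  have hpne : (1 - α * ⟪Dφ ξ', ξ'⟫) ≠ 0 := ne_of_gt hp
  have hsub : ⟪Dφ ξ', ξ - ξ'⟫ = ⟪Dφ ξ', ξ⟫ - ⟪Dφ ξ', ξ'⟫ := inner_sub_right _ _ _
  have hip : ⟪ξ, alphaGrad α Dφ ξ'⟫ = (1 - α * ⟪Dφ ξ', ξ'⟫)⁻¹ * ⟪Dφ ξ', ξ⟫ := by
    rw [alphaGrad, real_inner_smul_right, real_inner_comm ξ (Dφ ξ')]
  have hip' : ⟪ξ', alphaGrad α Dφ ξ'⟫ = (1 - α * ⟪Dφ ξ', ξ'⟫)⁻¹ * ⟪Dφ ξ', ξ'⟫ := by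
    rw [alphaGrad, real_inner_smul_right, real_inner_comm ξ' (Dφ ξ')]
  rw [hψ ξ' hξ', hip, hip', hsub]
  rw [aux1 α ⟪Dφ ξ', ξ⟫ ⟪Dφ ξ', ξ'⟫ hpne, aux2 α ⟪Dφ ξ', ξ'⟫ hpne, Real.log_div (by rw [hsub] at hkey; exact ne_of_gt hkey) hpne,
    Real.log_inv]
  ring
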